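/- For $z_1, z_2 \in \mathbb{C}^*$ with $z_1 \neq \pm 1$ and $z_2 \neq \pm 1$ and $x(z)=z+1/z$: $\operatorname{Res}_{z=1}\frac{f(z)\ln z}{x_1 - x(z)} + \operatorname{Res}_{z=-1}\frac{f(z)\ln z}{x_1-x(z)}$ with $f = \xi^0_0$ equals $\frac{x_1}{x_1^2 - 4}$, and with $f = \xi^1_0$ equals $\frac{2}{x_1^2-4}$, for any determination of $\ln$ holomorphic near $z = \pm 1$ (e.g., branch cut on $i\mathbb{R}_-$ with $\ln 1 = 0$). -/

import Mathlib

open Filter Metric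

section Helpers

-- Cauchy integral formula for the derivative, as a circle integral
private lemma cauchy2 {h : ℂ → ℂ} {c : ℂ} {ρ : ℝ} (hρ : 0 < ρ)
    (hh : DifferentiableOn ℂ h (closedBall c ρ)) :
    (∮ z in C(c, ρ), ((z - c) ^ 2)⁻¹ * h z)
      = (2 * (Real.pi : ℂ) * Complex.I) * deriv h c := by
  lift ρ to NNReal using hρ.le with ρ'
  have hρ' : 0 < ρ' := by exact_mod_cast hρ
  have H := hh.hasFPowerSeriesOnBall hρ'
  have hd : deriv h c = (cauchyPowerSeries h c ρ').coeff 1 := H.hasFPowerSeriesAt.deriv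
  have happ := cauchyPowerSeries_apply h c ρ' 1 1
  have hco : (cauchyPowerSeries h c ρ').coeff 1
      = (2 * (Real.pi : ℂ) * Complex.I)⁻¹ • ∮ z in C(c, (ρ' : ℝ)), ((z - c) ^ 2)⁻¹ * h z := by
    rw [FormalMultilinearSeries.coeff, show ((1 : Fin 1 → ℂ)) = fun _ => (1:ℂ) from rfl, happ]
    congr 1
    refine congrArg (fun f => circleIntegral f c (ρ' : ℝ)) (funext fun z => ?_)
    simp only [pow_one, smul_eq_mul, one_div, sq, mul_inv]
    ring
  rw [hd, hco, smul_eq_mul, ← mul_assoc, mul_inv_cancel₀ Complex.two_pi_I_ne_zero, one_mul]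

private lemma gderiv {x1 c : ℂ} {L : ℂ → ℂ}
    (hc0 : c ≠ 0) (hc2 : c ^ 2 = 1) (hx : x1 - (c + 1 / c) ≠ 0)
    (hL : ∀ᶠ z in nhds c, Complex.exp (L z) = z)
    (hg : AnalyticAt ℂ (fun z => L z / (x1 - (z + 1 / z))) c) :
    HasDerivAt (fun z => L z / (x1 - (z + 1 / z))) (c⁻¹ / (x1 - (c + 1 / c))) c := by
  set g : ℂ → ℂ := fun z => L z / (x1 - (z + 1 / z)) with hgdef
  have hgd : DifferentiableAt ℂ g c := hg.differentiableAt
  have hgc : HasDerivAt g (deriv g c) c := hgd.hasDerivAt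
  have hxd : HasDerivAt (fun z : ℂ => x1 - (z + 1 / z)) (-(1 + -(c ^ 2)⁻¹)) c := by
    have h1 : HasDerivAt (fun z : ℂ => z + 1 / z) (1 + -(c ^ 2)⁻¹) c := by
      have := (hasDerivAt_id' c).add (hasDerivAt_inv hc0)
      simp only [one_div]; exact this
    exact h1.const_sub x1
  have hxd0 : (-(1 + -(c ^ 2)⁻¹)) = 0 := by rw [hc2]; ring
  rw [hxd0] at hxd
  have hu : HasDerivAt (fun z => g z * (x1 - (z + 1 / z)))
      (deriv g c * (x1 - (c + 1 / c)) + g c * 0) c := hgc.mul hxd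
  have hF := hu.cexp
  have heq : (fun z => Complex.exp (g z * (x1 - (z + 1 / z)))) =ᶠ[nhds c] id := by
    have hcont : ContinuousAt (fun z : ℂ => x1 - (z + 1 / z)) c := hxd.continuousAt
    filter_upwards [hcont.eventually_ne hx, hL] with z h1 h2
    simp only [hgdef, div_mul_cancel₀ _ h1, h2, id]
  have h1 : deriv (fun z => Complex.exp (g z * (x1 - (z + 1 / z)))) c = 1 := by
    rw [heq.deriv_eq]; exact deriv_id c
  rw [hF.deriv] at h1
  have hLc : Complex.exp (L c) = c := hL.self_of_nhds
  rw [show g c * (x1 - (c + 1 / c)) = L c from div_mul_cancel₀ _ hx, hLc] at h1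
  have hd : deriv g c = c⁻¹ / (x1 - (c + 1 / c)) := by
    field_simp at h1
    have hcc : (1 / c) * c = 1 := one_div_mul_cancel hc0
    rw [eq_div_iff hx, inv_eq_one_div, eq_div_iff hc0]
    linear_combination h1 - deriv g c * hcc
  rw [← hd]; exact hgc

private lemma circle_eval {x1 c : ℂ} {L : ℂ → ℂ} {ρ : ℝ} (hρ : 0 < ρ)
    (F N : ℂ → ℂ) (hNd : Differentiable ℂ N)
    (hN' : HasDerivAt N (N c / c) c)
    (hsph : ∀ z ∈ sphere c ρ,
      F z = ((z - c) ^ 2)⁻¹ * (N z / (z + c) ^ 2 * (L z / (x1 - (z + 1 / z)))))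
    (hA : AnalyticOnNhd ℂ (fun z => L z / (x1 - (z + 1 / z))) (closedBall c ρ))
    (hB' : -c ∉ closedBall c ρ)
    (hc0 : c ≠ 0) (hc2 : c ^ 2 = 1) (hx : x1 - (c + 1 / c) ≠ 0)
    (hL : ∀ᶠ z in nhds c, Complex.exp (L z) = z) :
    (∮ z in C(c, ρ), F z)
      = (2 * (Real.pi : ℂ) * Complex.I)
          * (N c / (c + c) ^ 2 * (c⁻¹ / (x1 - (c + 1 / c)))) := by
  set g : ℂ → ℂ := fun z => L z / (x1 - (z + 1 / z)) with hgdef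
  set h : ℂ → ℂ := fun z => N z / (z + c) ^ 2 * g z with hhdef
  have hball : ∀ z ∈ closedBall c ρ, z + c ≠ 0 := by
    intro z hz h0
    exact hB' (by rw [show -c = z by linear_combination -h0]; exact hz)
  have hhd : DifferentiableOn ℂ h (closedBall c ρ) := by
    apply DifferentiableOn.mul
    · exact DifferentiableOn.div hNd.differentiableOn
        (((differentiable_id.add_const c).pow 2).differentiableOn)
        (fun z hz => pow_ne_zero 2 (hball z hz))
    · exact hA.differentiableOn
  have hco : (∮ z in C(c, ρ), F z) = ∮ z in C(c, ρ), ((z - c) ^ 2)⁻¹ * h z :=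
    circleIntegral.integral_congr hρ.le (fun z hz => hsph z hz)
  rw [hco, cauchy2 hρ hhd]
  congr 1
  have hgd : HasDerivAt g (c⁻¹ / (x1 - (c + 1 / c))) c :=
    gderiv hc0 hc2 hx hL (hA c (Metric.mem_closedBall_self hρ.le))
  have hden : HasDerivAt (fun z : ℂ => (z + c) ^ 2) (2 * (c + c) ^ 1 * 1) c :=
    ((hasDerivAt_id c).add_const c).pow 2
  have hcc2 : c + c ≠ 0 := by
    rw [show c + c = 2 * c by ring]; exact mul_ne_zero two_ne_zero hc0
  have hAd : HasDerivAt (fun z => N z / (z + c) ^ 2)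
      ((N c / c * (c + c) ^ 2 - N c * (2 * (c + c) ^ 1 * 1)) / ((c + c) ^ 2) ^ 2) c :=
    hN'.div hden (pow_ne_zero 2 hcc2)
  have hA0 : (N c / c * (c + c) ^ 2 - N c * (2 * (c + c) ^ 1 * 1)) / ((c + c) ^ 2) ^ 2 = 0 := by
    rw [div_eq_zero_iff]; left; field_simp; ring
  rw [hA0] at hAd
  have hder := (hAd.mul hgd).deriv
  rw [hhdef]
  rw [show (fun z => N z / (z + c) ^ 2 * g z)
      = (fun z => N z / (z + c) ^ 2) * g from rfl, hder]
  rw [zero_mul, zero_add]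

end Helpers

/-- The coefficient (w.r.t. `dz`) of the 1-forms: `xi α 0` is the coefficient of
`ξ^α_{-1}(z) = z^{-α} dz`, and `xi α 1` the coefficient of `ξ^α_0 = -d(ξ^α_{-1}/dx)`
where `x(z) = z + 1/z`. -/
noncomputable def xi (α : ℕ) : ℕ → ℂ → ℂ
  | 0 => fun z => z ^ (-(α : ℤ))
  | (k + 1) => fun z => - deriv (fun w => xi α k w / (1 - 1 / w ^ 2)) z

private lemma xi01 {z : ℂ} (h0 : z ≠ 0) (hd : z ^ 2 - 1 ≠ 0) :
    xi 0 1 z = 2 * z / (z ^ 2 - 1) ^ 2 := by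
  have heq : (fun w : ℂ => xi 0 0 w / (1 - 1 / w ^ 2)) =ᶠ[nhds z]
      (fun w => w ^ 2 / (w ^ 2 - 1)) := by
    filter_upwards [eventually_ne_nhds h0] with w hw
    have hw2 : (w : ℂ) ^ 2 ≠ 0 := pow_ne_zero _ hw
    simp only [xi]
    rw [show (-((0:ℕ):ℤ)) = 0 from rfl, zpow_zero,
      show (1 : ℂ) - 1 / w ^ 2 = (w ^ 2 - 1) / w ^ 2 by field_simp, one_div_div]
  have hD : HasDerivAt (fun w : ℂ => w ^ 2 / (w ^ 2 - 1))
      ((2 * z ^ 1 * (z ^ 2 - 1) - z ^ 2 * (2 * z ^ 1)) / (z ^ 2 - 1) ^ 2) z :=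
    (hasDerivAt_pow 2 z).div ((hasDerivAt_pow 2 z).sub_const 1) hd
  show - deriv (fun w : ℂ => xi 0 0 w / (1 - 1 / w ^ 2)) z = _
  rw [heq.deriv_eq, hD.deriv]
  field_simp
  ring

private lemma xi11 {z : ℂ} (h0 : z ≠ 0) (hd : z ^ 2 - 1 ≠ 0) :
    xi 1 1 z = (z ^ 2 + 1) / (z ^ 2 - 1) ^ 2 := by
  have heq : (fun w : ℂ => xi 1 0 w / (1 - 1 / w ^ 2)) =ᶠ[nhds z]
      (fun w => w / (w ^ 2 - 1)) := by
    filter_upwards [eventually_ne_nhds h0] with w hw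
    have hw2 : (w : ℂ) ^ 2 ≠ 0 := pow_ne_zero _ hw
    simp only [xi]
    rw [show (1 : ℂ) - 1 / w ^ 2 = (w ^ 2 - 1) / w ^ 2 by field_simp, div_div_eq_mul_div,
      show w ^ (-((1:ℕ):ℤ)) * w ^ 2 = w by
        rw [show (-((1:ℕ):ℤ)) = -1 from rfl, zpow_neg_one]; field_simp [sq]]
  have hD : HasDerivAt (fun w : ℂ => w / (w ^ 2 - 1))
      ((1 * (z ^ 2 - 1) - z * (2 * z ^ 1)) / (z ^ 2 - 1) ^ 2) z :=
    (hasDerivAt_id z).div ((hasDerivAt_pow 2 z).sub_const 1) hd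
  show - deriv (fun w : ℂ => xi 1 0 w / (1 - 1 / w ^ 2)) z = _
  rw [heq.deriv_eq, hD.deriv]
  field_simp
  ring

/-- For `x1 ∉ {2,-2}` and any branch `L` of the logarithm holomorphic near `z = ±1`
(`exp ∘ L = id` there), the sum of residues at `z = 1` and `z = -1` — computed as
`(1/2πi)` times circle integrals over small circles around `±1` whose closed disks avoid
the other singularities, on which `L/(x1 - x)` is analytic — of
`f(z) ln z/(x1 - x(z))` with `f = ξ^0_0` equals `x1/(x1^2-4)`, and with `f = ξ^1_0`
equals `2/(x1^2-4)`. -/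
theorem stmt19 (x1 : ℂ) (hx1 : x1 ≠ 2) (hx1' : x1 ≠ -2)
    (L : ℂ → ℂ)
    (hL1 : ∀ᶠ z in nhds (1 : ℂ), Complex.exp (L z) = z)
    (hL2 : ∀ᶠ z in nhds (-1 : ℂ), Complex.exp (L z) = z)
    (ρ1 ρ2 : ℝ) (hρ1 : 0 < ρ1) (hρ2 : 0 < ρ2)
    (hA1 : AnalyticOnNhd ℂ (fun z => L z / (x1 - (z + 1 / z))) (closedBall (1 : ℂ) ρ1))
    (hA2 : AnalyticOnNhd ℂ (fun z => L z / (x1 - (z + 1 / z))) (closedBall (-1 : ℂ) ρ2))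
    (hB1 : (0 : ℂ) ∉ closedBall (1 : ℂ) ρ1) (hB1' : (-1 : ℂ) ∉ closedBall (1 : ℂ) ρ1)
    (hB2 : (0 : ℂ) ∉ closedBall (-1 : ℂ) ρ2) (hB2' : (1 : ℂ) ∉ closedBall (-1 : ℂ) ρ2) :
    ((∮ z in C(1, ρ1), xi 0 1 z * L z / (x1 - (z + 1 / z)))
        + (∮ z in C(-1, ρ2), xi 0 1 z * L z / (x1 - (z + 1 / z))))
        / (2 * (Real.pi : ℂ) * Complex.I)
      = x1 / (x1 ^ 2 - 4) ∧
    ((∮ z in C(1, ρ1), xi 1 1 z * L z / (x1 - (z + 1 / z)))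
        + (∮ z in C(-1, ρ2), xi 1 1 z * L z / (x1 - (z + 1 / z))))
        / (2 * (Real.pi : ℂ) * Complex.I)
      = 2 / (x1 ^ 2 - 4) := by
  have h2 : x1 - 2 ≠ 0 := sub_ne_zero.2 hx1
  have h2' : x1 + 2 ≠ 0 := by intro h; exact hx1' (by linear_combination h)
  have hx1c : x1 - (1 + 1 / 1) ≠ 0 := by
    rw [show (1 : ℂ) + 1 / 1 = 2 by norm_num]; exact h2
  have hx2c : x1 - (-1 + 1 / (-1)) ≠ 0 := by
    rw [show (-1 : ℂ) + 1 / (-1) = -2 by norm_num]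
    intro h; exact h2' (by linear_combination h)
  have hc01 : (1 : ℂ) ≠ 0 := one_ne_zero
  have hc02 : (-1 : ℂ) ≠ 0 := by norm_num
  have hc21 : (1 : ℂ) ^ 2 = 1 := one_pow 2
  have hc22 : (-1 : ℂ) ^ 2 = 1 := by norm_num
  have hB2'' : -(-1 : ℂ) ∉ closedBall (-1 : ℂ) ρ2 := by rw [neg_neg]; exact hB2'
  -- generic sphere facts
  have sphfacts : ∀ (c : ℂ) (ρ : ℝ), 0 < ρ → c ^ 2 = 1 →
      (0 : ℂ) ∉ closedBall c ρ → -c ∉ closedBall c ρ →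
      ∀ z ∈ sphere c ρ, z ≠ 0 ∧ z ≠ c ∧ z + c ≠ 0 ∧ z ^ 2 - 1 ≠ 0 := by
    intro c ρ hρ hc2 hB hB' z hz
    have hzb := sphere_subset_closedBall hz
    have hz0 : z ≠ 0 := fun h => hB (h ▸ hzb)
    have hzm : z + c ≠ 0 := by
      intro h; exact hB' (by rw [show -c = z by linear_combination -h]; exact hzb)
    have hz1 : z ≠ c := by
      intro h; rw [Metric.mem_sphere, h, dist_self] at hz; exact hρ.ne hz
    refine ⟨hz0, hz1, hzm, ?_⟩
    intro h
    have hfac : (z - c) * (z + c) = 0 := by linear_combination h - hc2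
    rcases mul_eq_zero.1 hfac with h' | h'
    · exact hz1 (by linear_combination h')
    · exact hzm h'
  -- the four circle integral evaluations
  have e1 : (∮ z in C(1, ρ1), xi 0 1 z * L z / (x1 - (z + 1 / z)))
      = (2 * (Real.pi : ℂ) * Complex.I)
          * ((2 * 1) / ((1 : ℂ) + 1) ^ 2 * ((1 : ℂ)⁻¹ / (x1 - (1 + 1 / 1)))) := by
    refine circle_eval hρ1 _ (fun z => 2 * z) (differentiable_id.const_mul 2) ?_ ?_ hA1 hB1'
      hc01 hc21 hx1c hL1
    · have := (hasDerivAt_id (1 : ℂ)).const_mul (2 : ℂ)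
      exact this.congr_deriv (by norm_num)
    · intro z hz
      obtain ⟨hz0, hz1, hzm, hzd⟩ := sphfacts 1 ρ1 hρ1 hc21 hB1 hB1' z hz
      rw [xi01 hz0 hzd, mul_div_assoc,
        show 2 * z / (z ^ 2 - 1) ^ 2 = ((z - 1) ^ 2)⁻¹ * (2 * z / (z + 1) ^ 2) by
          rw [show z ^ 2 - 1 = (z - 1) * (z + 1) by ring, mul_pow,
            div_mul_eq_div_div_swap, div_eq_inv_mul], mul_assoc]
  have e2 : (∮ z in C(-1, ρ2), xi 0 1 z * L z / (x1 - (z + 1 / z)))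
      = (2 * (Real.pi : ℂ) * Complex.I)
          * ((2 * (-1)) / ((-1 : ℂ) + (-1)) ^ 2 * ((-1 : ℂ)⁻¹ / (x1 - (-1 + 1 / (-1))))) := by
    refine circle_eval hρ2 _ (fun z => 2 * z) (differentiable_id.const_mul 2) ?_ ?_ hA2 hB2''
      hc02 hc22 hx2c hL2
    · have := (hasDerivAt_id (-1 : ℂ)).const_mul (2 : ℂ)
      exact this.congr_deriv (by norm_num)
    · intro z hz
      obtain ⟨hz0, hz1, hzm, hzd⟩ := sphfacts (-1) ρ2 hρ2 hc22 hB2 hB2'' z hz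
      rw [xi01 hz0 hzd, mul_div_assoc,
        show 2 * z / (z ^ 2 - 1) ^ 2 = ((z - (-1)) ^ 2)⁻¹ * (2 * z / (z + (-1)) ^ 2) by
          rw [show z ^ 2 - 1 = (z - (-1)) * (z + (-1)) by ring, mul_pow,
            div_mul_eq_div_div_swap, div_eq_inv_mul], mul_assoc]
  have e3 : (∮ z in C(1, ρ1), xi 1 1 z * L z / (x1 - (z + 1 / z)))
      = (2 * (Real.pi : ℂ) * Complex.I)
          * (((1 : ℂ) ^ 2 + 1) / ((1 : ℂ) + 1) ^ 2 * ((1 : ℂ)⁻¹ / (x1 - (1 + 1 / 1)))) := by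
    refine circle_eval hρ1 _ (fun z => z ^ 2 + 1)
      ((differentiable_id.pow 2).add_const 1) ?_ ?_ hA1 hB1' hc01 hc21 hx1c hL1
    · have := (hasDerivAt_pow 2 (1 : ℂ)).add_const 1
      exact this.congr_deriv (by norm_num)
    · intro z hz
      obtain ⟨hz0, hz1, hzm, hzd⟩ := sphfacts 1 ρ1 hρ1 hc21 hB1 hB1' z hz
      rw [xi11 hz0 hzd, mul_div_assoc,
        show (z ^ 2 + 1) / (z ^ 2 - 1) ^ 2 = ((z - 1) ^ 2)⁻¹ * ((z ^ 2 + 1) / (z + 1) ^ 2) by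
          rw [show z ^ 2 - 1 = (z - 1) * (z + 1) by ring, mul_pow,
            div_mul_eq_div_div_swap, div_eq_inv_mul], mul_assoc]
  have e4 : (∮ z in C(-1, ρ2), xi 1 1 z * L z / (x1 - (z + 1 / z)))
      = (2 * (Real.pi : ℂ) * Complex.I)
          * (((-1 : ℂ) ^ 2 + 1) / ((-1 : ℂ) + (-1)) ^ 2 * ((-1 : ℂ)⁻¹ / (x1 - (-1 + 1 / (-1))))) := by
    refine circle_eval hρ2 _ (fun z => z ^ 2 + 1)
      ((differentiable_id.pow 2).add_const 1) ?_ ?_ hA2 hB2'' hc02 hc22 hx2c hL2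
    · have := (hasDerivAt_pow 2 (-1 : ℂ)).add_const 1
      exact this.congr_deriv (by norm_num)
    · intro z hz
      obtain ⟨hz0, hz1, hzm, hzd⟩ := sphfacts (-1) ρ2 hρ2 hc22 hB2 hB2'' z hz
      rw [xi11 hz0 hzd, mul_div_assoc,
        show (z ^ 2 + 1) / (z ^ 2 - 1) ^ 2
            = ((z - (-1)) ^ 2)⁻¹ * ((z ^ 2 + 1) / (z + (-1)) ^ 2) by
          rw [show z ^ 2 - 1 = (z - (-1)) * (z + (-1)) by ring, mul_pow,
            div_mul_eq_div_div_swap, div_eq_inv_mul], mul_assoc]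
  have h4 : x1 ^ 2 - 4 ≠ 0 := by
    rw [show x1 ^ 2 - 4 = (x1 - 2) * (x1 + 2) by ring]
    exact mul_ne_zero h2 h2'
  constructor
  · rw [e1, e2, ← mul_add, mul_div_cancel_left₀ _ Complex.two_pi_I_ne_zero]
    rw [show x1 - (1 + 1 / 1) = x1 - 2 by norm_num,
      show x1 - (-1 + 1 / (-1)) = x1 + 2 by norm_num]
    field_simp
    ring
  · rw [e3, e4, ← mul_add, mul_div_cancel_left₀ _ Complex.two_pi_I_ne_zero]
    rw [show x1 - (1 + 1 / 1) = x1 - 2 by norm_num,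
      show x1 - (-1 + 1 / (-1)) = x1 + 2 by norm_num]
    field_simp
    ring
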